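/- Let P and Q be Hermitian projectors on a finite-dimensional complex inner product space, and let V be an isometry (V†V = 1). If ‖Q − V(P ⊗ P_anc)V†‖ ≤ ε for some Hermitian projector P_anc on the ancilla space, then ‖Q − V(P ⊗ 1_anc)V† Q‖ ≤ 2ε. (Bounded incoherence implies bounded unfaithfulness, with δ ≤ 2ε.) -/

import Mathlib

open Matrix
open scoped Kronecker

lemma aux_kron_conjT {ι κ : Type*} (A : Matrix ι ι ℂ) (B : Matrix κ κ ℂ) :
    (A ⊗ₖ B)ᴴ = Aᴴ ⊗ₖ Bᴴ := by
  ext ⟨i, j⟩ ⟨k, l⟩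
  simp [Matrix.conjTranspose_apply, mul_comm]

lemma aux_norm_le_one {H : Type*} [NormedAddCommGroup H] [InnerProductSpace ℂ H]
    [CompleteSpace H] (T : H →L[ℂ] H) (h1 : IsSelfAdjoint T) (h2 : T ∘L T = T) :
    ‖T‖ ≤ 1 := by
  have key : ‖T‖ * ‖T‖ = ‖T‖ := by
    have := ContinuousLinearMap.norm_adjoint_comp_self T
    rw [h1.adjoint_eq, h2] at this; exact this.symm
  nlinarith [norm_nonneg T]

/-- Bounded incoherence implies bounded unfaithfulness:
if `‖Q − V (P ⊗ P_anc) V†‖ ≤ ε` then `‖Q − V (P ⊗ 1) V† Q‖ ≤ 2ε`. -/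
theorem incoherence_implies_unfaithfulness
    {ι κ : Type*} [Fintype ι] [DecidableEq ι] [Fintype κ] [DecidableEq κ]
    {Ht : Type*} [NormedAddCommGroup Ht] [InnerProductSpace ℂ Ht] [FiniteDimensional ℂ Ht]
    (P : Matrix ι ι ℂ) (hPher : P.IsHermitian) (hPidem : P * P = P)
    (Panc : Matrix κ κ ℂ) (hPancher : Panc.IsHermitian) (hPancidem : Panc * Panc = Panc)
    (Q : Ht →L[ℂ] Ht) (hQsa : IsSelfAdjoint Q) (hQidem : Q ∘L Q = Q)
    (V : EuclideanSpace ℂ (ι × κ) →L[ℂ] Ht)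
    (hV : ContinuousLinearMap.adjoint V ∘L V = 1)
    (ε : ℝ)
    (hε : ‖Q - V ∘L Matrix.toEuclideanCLM (𝕜 := ℂ) (P ⊗ₖ Panc) ∘L
        ContinuousLinearMap.adjoint V‖ ≤ ε) :
    ‖Q - (V ∘L Matrix.toEuclideanCLM (𝕜 := ℂ) (P ⊗ₖ (1 : Matrix κ κ ℂ)) ∘L
        ContinuousLinearMap.adjoint V) ∘L Q‖ ≤ 2 * ε := by
  set M := Matrix.toEuclideanCLM (𝕜 := ℂ) (P ⊗ₖ Panc) with hM
  set N := Matrix.toEuclideanCLM (𝕜 := ℂ) (P ⊗ₖ (1 : Matrix κ κ ℂ)) with hN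
  set A := V ∘L M ∘L ContinuousLinearMap.adjoint V with hA
  set Pi := V ∘L N ∘L ContinuousLinearMap.adjoint V with hPi
  -- N ∘L M = M
  have hNM : N ∘L M = M := by
    rw [hM, hN, ← ContinuousLinearMap.mul_def, ← _root_.map_mul, ← Matrix.mul_kronecker_mul,
      hPidem, one_mul]
  have hNN : N ∘L N = N := by
    rw [hN, ← ContinuousLinearMap.mul_def, ← _root_.map_mul, ← Matrix.mul_kronecker_mul,
      hPidem, one_mul]
  have hNsa : IsSelfAdjoint N := by
    have h1 : (P ⊗ₖ (1 : Matrix κ κ ℂ))ᴴ = P ⊗ₖ (1 : Matrix κ κ ℂ) := by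
      rw [aux_kron_conjT, hPher.eq, Matrix.conjTranspose_one]
    have h2 := map_star (Matrix.toEuclideanCLM (n := ι × κ) (𝕜 := ℂ)) (P ⊗ₖ (1 : Matrix κ κ ℂ))
    show star N = N
    rw [hN, ← h2]
    show Matrix.toEuclideanCLM (𝕜 := ℂ) (P ⊗ₖ (1 : Matrix κ κ ℂ))ᴴ = _
    rw [h1]
  -- Pi is a self-adjoint idempotent
  have hPiA : Pi ∘L A = A := by
    rw [hPi, hA]
    calc (V ∘L N ∘L ContinuousLinearMap.adjoint V) ∘L V ∘L M ∘L ContinuousLinearMap.adjoint V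
        = V ∘L N ∘L ((ContinuousLinearMap.adjoint V ∘L V) ∘L M ∘L ContinuousLinearMap.adjoint V) := by
          simp only [ContinuousLinearMap.comp_assoc]
      _ = V ∘L (N ∘L M) ∘L ContinuousLinearMap.adjoint V := by
          rw [hV]; simp only [ContinuousLinearMap.one_def, ContinuousLinearMap.id_comp,
            ContinuousLinearMap.comp_assoc]
      _ = V ∘L M ∘L ContinuousLinearMap.adjoint V := by rw [hNM]
  have hPiPi : Pi ∘L Pi = Pi := by
    rw [hPi]
    calc (V ∘L N ∘L ContinuousLinearMap.adjoint V) ∘L V ∘L N ∘L ContinuousLinearMap.adjoint V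
        = V ∘L N ∘L ((ContinuousLinearMap.adjoint V ∘L V) ∘L N ∘L ContinuousLinearMap.adjoint V) := by
          simp only [ContinuousLinearMap.comp_assoc]
      _ = V ∘L (N ∘L N) ∘L ContinuousLinearMap.adjoint V := by
          rw [hV]; simp only [ContinuousLinearMap.one_def, ContinuousLinearMap.id_comp,
            ContinuousLinearMap.comp_assoc]
      _ = V ∘L N ∘L ContinuousLinearMap.adjoint V := by rw [hNN]
  have hPisa : IsSelfAdjoint Pi := by
    rw [_root_.IsSelfAdjoint, ContinuousLinearMap.star_eq_adjoint, hPi,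
      ContinuousLinearMap.adjoint_comp, ContinuousLinearMap.adjoint_comp,
      ContinuousLinearMap.adjoint_adjoint, hNsa.adjoint_eq, ContinuousLinearMap.comp_assoc]
  have hPinorm : ‖Pi‖ ≤ 1 := aux_norm_le_one Pi hPisa hPiPi
  have hεnn : 0 ≤ ε := le_trans (norm_nonneg _) hε
  -- decomposition
  have hdecomp : Q - Pi ∘L Q = (Q - A) + Pi ∘L (A - Q) := by
    rw [ContinuousLinearMap.comp_sub, hPiA]
    abel
  rw [hdecomp]
  calc ‖(Q - A) + Pi ∘L (A - Q)‖ ≤ ‖Q - A‖ + ‖Pi ∘L (A - Q)‖ := norm_add_le _ _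
    _ ≤ ‖Q - A‖ + ‖Pi‖ * ‖A - Q‖ := by
        gcongr; exact ContinuousLinearMap.opNorm_comp_le _ _
    _ ≤ ε + 1 * ε := by
        rw [norm_sub_rev (A) Q]
        gcongr
    _ = 2 * ε := by ring
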